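/- With s_{I,J} = det(C(i_k, j_l)) for sets I, J of size r, the identity s_{λ(I)}(x_1+1, ..., x_r+1) = ∑_{J ≤ I} s_{I,J} * s_{λ(J)}(x_1, ..., x_r) holds, where s_λ denotes the Schur polynomial and λ(I) = (i_r - (r-1), ..., i_2 - 1, i_1) for I = {i_1 < ... < i_r}. -/

import Mathlib

open scoped BigOperators

/-- The complete homogeneous symmetric polynomial of degree `d` in `r` variables. -/
def hsym (r d : ℕ) (x : Fin r → ℚ) : ℚ :=
  ∑ c ∈ (Fintype.piFinset fun _ : Fin r => Finset.range (d + 1)).filter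
      (fun c => ∑ i, c i = d), ∏ i, x i ^ c i

/-- `h` with integer index (zero for negative index). -/
def hsymZ (r : ℕ) (m : ℤ) (x : Fin r → ℚ) : ℚ :=
  if 0 ≤ m then hsym r m.toNat x else 0

/-- The Schur polynomial `s_λ(x_1,…,x_r)` via the Jacobi–Trudi determinant
`s_λ = det(h_{λ_k + l - k})_{1 ≤ k,l ≤ r}`. -/
def schur (r : ℕ) (lam : Fin r → ℕ) (x : Fin r → ℚ) : ℚ :=
  Matrix.det (Matrix.of fun k l : Fin r =>
    hsymZ r ((lam k : ℤ) + (l : ℕ) - (k : ℕ)) x)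

/-- The partition `λ(I) = (i_r - (r-1), …, i_2 - 1, i_1)` associated to a strictly
increasing tuple `I`. -/
def lambdaOf (r : ℕ) (I : Fin r → ℕ) : Fin r → ℕ :=
  fun k => I k.rev - (k.rev : ℕ)

noncomputable section
open Finset
variable {A : Type*} [CommRing A]

def hsymA (r d : ℕ) (x : Fin r → A) : A :=
  ∑ c ∈ (Fintype.piFinset fun _ : Fin r => Finset.range (d + 1)).filter
      (fun c => ∑ i, c i = d), ∏ i, x i ^ c i

def hsymZA (r : ℕ) (m : ℤ) (x : Fin r → A) : A :=
  if 0 ≤ m then hsymA r m.toNat x else 0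

lemma hsymA_zero (r : ℕ) (x : Fin r → A) : hsymA r 0 x = 1 := by
  unfold hsymA
  rw [Finset.sum_eq_single (fun _ => 0)]
  · simp
  · intro c hc hne
    simp only [mem_filter] at hc
    exfalso; apply hne; funext i
    have := Finset.sum_eq_zero_iff.mp hc.2
    exact this i (mem_univ i)
  · intro h
    exfalso; apply h
    simp [Fintype.mem_piFinset]

/-- geometric series -/
def geo (a : A) : PowerSeries A := PowerSeries.mk fun n => a ^ n

lemma geo_inv (a : A) : (1 - PowerSeries.C (R := A) a * PowerSeries.X) * geo a = 1 := by
  ext n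
  rw [sub_mul, one_mul]
  cases n with
  | zero => simp [geo]
  | succ n =>
    rw [map_sub, mul_assoc, PowerSeries.coeff_C_mul, PowerSeries.coeff_succ_X_mul]
    simp [geo, pow_succ, mul_comm]

lemma coeff_prod_geo (r d : ℕ) (x : Fin r → A) :
    PowerSeries.coeff (R := A) d (∏ i, geo (x i)) = hsymA r d x := by
  rw [PowerSeries.coeff_prod]
  unfold hsymA
  refine Finset.sum_nbij' (fun l => fun i => l i) (fun c => Finsupp.equivFunOnFinite.symm c)
    ?_ ?_ ?_ ?_ ?_
  · intro l hl
    rw [Finset.mem_finsuppAntidiag] at hl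
    simp only [mem_filter, Fintype.mem_piFinset, Finset.mem_range]
    constructor
    · intro i
      have : l i ≤ d := by
        rw [← hl.1]
        exact Finset.single_le_sum (fun j _ => Nat.zero_le _) (mem_univ i)
      omega
    · exact hl.1
  · intro c hc
    simp only [mem_filter] at hc
    rw [Finset.mem_finsuppAntidiag]
    constructor
    · simpa using hc.2
    · intro i _; exact mem_coe.mpr (mem_univ i)
  · intro l _; exact Finsupp.ext fun i => rfl
  · intro c _; rfl
  · intro l _
    apply Finset.prod_congr rfl
    intro i _
    simp [geo]

lemma hsymZA_sub_of_le {n k : ℕ} (h : k ≤ n) (r : ℕ) (x : Fin r → A) :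
    hsymZA r ((n : ℤ) - (k : ℕ)) x = hsymA r (n - k) x := by
  unfold hsymZA
  rw [if_pos (by omega)]
  congr 1; omega

lemma hsymZA_sub_of_gt {n k : ℕ} (h : n < k) (r : ℕ) (x : Fin r → A) :
    hsymZA r ((n : ℤ) - (k : ℕ)) x = 0 := by
  unfold hsymZA
  rw [if_neg (by omega)]

def Pm (r : ℕ) (x : Fin r → A) (j : Fin r) : Polynomial A :=
  ∏ i ∈ Finset.univ.erase j, (1 - Polynomial.C (x i) * Polynomial.X)

lemma Pm_coeff_eq_zero {r : ℕ} (x : Fin r → A) (j : Fin r) {m : ℕ} (hm : r ≤ m) :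
    (Pm r x j).coeff m = 0 := by
  apply Polynomial.coeff_eq_zero_of_natDegree_lt
  have h1 : (Pm r x j).natDegree ≤ ∑ i ∈ Finset.univ.erase j, 1 := by
    refine le_trans (Polynomial.natDegree_prod_le _ _) (Finset.sum_le_sum ?_)
    intro i _
    refine le_trans (Polynomial.natDegree_sub_le _ _) ?_
    simp only [Polynomial.natDegree_one, max_le_iff]
    exact ⟨Nat.zero_le _, le_trans (Polynomial.natDegree_mul_le)
      (by simp [Polynomial.natDegree_X_le])⟩
  have h2 : ∑ i ∈ Finset.univ.erase j, 1 = r - 1 := by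
    rw [Finset.sum_const, smul_eq_mul, mul_one, Finset.card_erase_of_mem (mem_univ j),
      Finset.card_univ, Fintype.card_fin]
  have hr : 0 < r := j.pos
  omega

lemma Pm_mul_geo {r : ℕ} (x : Fin r → A) (j : Fin r) :
    ((Pm r x j : Polynomial A) : PowerSeries A) * (∏ i, geo (x i)) = geo (x j) := by
  have hc : ((Pm r x j : Polynomial A) : PowerSeries A)
      = ∏ i ∈ Finset.univ.erase j, (1 - PowerSeries.C (R := A) (x i) * PowerSeries.X) := by
    unfold Pm
    rw [← Polynomial.coeToPowerSeries.ringHom_apply, map_prod]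
    refine Finset.prod_congr rfl (fun i _ => ?_)
    simp [Polynomial.coeToPowerSeries.ringHom_apply, Polynomial.coe_sub, Polynomial.coe_mul,
      Polynomial.coe_C, Polynomial.coe_X]
  rw [hc, ← Finset.prod_erase_mul Finset.univ (fun i => geo (x i)) (mem_univ j),
    ← mul_assoc, ← Finset.prod_mul_distrib,
    Finset.prod_congr rfl (fun i _ => geo_inv (x i)), Finset.prod_const_one, one_mul]

lemma key_entry {r : ℕ} (x : Fin r → A) (j : Fin r) (n : ℕ) :
    ∑ m : Fin r, hsymZA r ((n : ℤ) - (m : ℕ)) x * (Pm r x j).coeff m = x j ^ n := by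
  have h1 : (PowerSeries.coeff (R := A) n) (((Pm r x j : Polynomial A) : PowerSeries A)
      * (∏ i, geo (x i))) = x j ^ n := by
    rw [Pm_mul_geo]; simp [geo]
  rw [PowerSeries.coeff_mul] at h1
  have h2 : ∀ p ∈ Finset.HasAntidiagonal.antidiagonal n,
      (PowerSeries.coeff (R := A) p.1) ((Pm r x j : Polynomial A) : PowerSeries A)
        * (PowerSeries.coeff (R := A) p.2) (∏ i, geo (x i))
      = (Pm r x j).coeff p.1 * hsymA r p.2 x := by
    intro p _
    rw [Polynomial.coeff_coe, coeff_prod_geo]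
  rw [Finset.sum_congr rfl h2] at h1
  rw [Finset.Nat.sum_antidiagonal_eq_sum_range_succ_mk] at h1
  set g : ℕ → A := fun m => (Pm r x j).coeff m * hsymZA r ((n : ℤ) - (m : ℕ)) x with hg
  have hL : ∑ m : Fin r, hsymZA r ((n : ℤ) - (m : ℕ)) x * (Pm r x j).coeff m
      = ∑ m ∈ Finset.range r, g m := by
    rw [Fin.sum_univ_eq_sum_range (fun m => hsymZA r ((n : ℤ) - m) x * (Pm r x j).coeff m)]
    exact Finset.sum_congr rfl (fun m _ => mul_comm _ _)
  have e1 : ∑ m ∈ Finset.range r, g m = ∑ m ∈ Finset.range (n + r + 1), g m :=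
    Finset.sum_subset (Finset.range_subset_range.mpr (by omega)) (fun m _ hm => by
      rw [Finset.mem_range, not_lt] at hm
      simp only [hg, Pm_coeff_eq_zero x j hm, zero_mul])
  have e2a : ∑ m ∈ Finset.range (n + 1), g m = ∑ m ∈ Finset.range (n + r + 1), g m :=
    Finset.sum_subset (Finset.range_subset_range.mpr (by omega)) (fun m _ hm => by
      rw [Finset.mem_range, not_lt] at hm
      simp only [hg, hsymZA_sub_of_gt (show n < m by omega), mul_zero])
  have e2b : ∑ m ∈ Finset.range (n + 1), g m
      = ∑ k ∈ Finset.range (n + 1), (Pm r x j).coeff k * hsymA r (n - k) x := by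
    refine Finset.sum_congr rfl (fun k hk => ?_)
    rw [Finset.mem_range] at hk
    simp only [hg, hsymZA_sub_of_le (show k ≤ n by omega)]
  rw [hL, e1, ← e2a, e2b]
  exact h1

def Mmat (r : ℕ) (I : Fin r → ℕ) (x : Fin r → A) : Matrix (Fin r) (Fin r) A :=
  Matrix.of fun k m => hsymZA r ((I k : ℤ) - (m : ℕ)) x

def Emat (r : ℕ) (x : Fin r → A) : Matrix (Fin r) (Fin r) A :=
  Matrix.of fun m j => (Pm r x j).coeff m

def Vmat (r : ℕ) (I : Fin r → ℕ) (x : Fin r → A) : Matrix (Fin r) (Fin r) A :=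
  Matrix.of fun k j => x j ^ I k

lemma MmulE (r : ℕ) (I : Fin r → ℕ) (x : Fin r → A) :
    Mmat r I x * Emat r x = Vmat r I x := by
  ext k j
  simp only [Matrix.mul_apply, Mmat, Emat, Vmat, Matrix.of_apply]
  exact key_entry x j (I k)

lemma Mmat_id_det (r : ℕ) (x : Fin r → A) :
    (Mmat r (fun k => (k : ℕ)) x).det = 1 := by
  rw [Matrix.det_of_lowerTriangular _ (by
    intro k m h
    simp only [OrderDual.toDual_lt_toDual] at h
    exact hsymZA_sub_of_gt (show (k:ℕ) < (m:ℕ) from h) r x)]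
  refine Finset.prod_eq_one (fun k _ => ?_)
  show hsymZA r (((k:ℕ) : ℤ) - ((k:ℕ):ℕ)) x = 1
  rw [hsymZA_sub_of_le (le_refl (k:ℕ)), Nat.sub_self, hsymA_zero]

lemma detM_mul_vdm (r : ℕ) (I : Fin r → ℕ) (x : Fin r → A) :
    (Mmat r I x).det * (Vmat r (fun k => (k : ℕ)) x).det = (Vmat r I x).det := by
  have hE : (Emat r x).det = (Vmat r (fun k => (k : ℕ)) x).det := by
    rw [← MmulE r (fun k => (k : ℕ)) x, Matrix.det_mul, Mmat_id_det, one_mul]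
  rw [← hE, ← Matrix.det_mul, MmulE]

lemma strictMono_eq_of_image_eq {r : ℕ} {J₁ J₂ : Fin r → ℕ}
    (h₁ : StrictMono J₁) (h₂ : StrictMono J₂)
    (h : Finset.image J₁ Finset.univ = Finset.image J₂ Finset.univ) : J₁ = J₂ := by
  have hcard : (Finset.image J₁ Finset.univ).card = r := by
    rw [Finset.card_image_of_injective _ h₁.injective, Finset.card_univ, Fintype.card_fin]
  have e₁ : J₁ = ⇑((Finset.image J₁ Finset.univ).orderEmbOfFin hcard) :=
    Finset.orderEmbOfFin_unique hcard
      (fun i => Finset.mem_image_of_mem _ (Finset.mem_univ i)) h₁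
  have e₂ : J₂ = ⇑((Finset.image J₁ Finset.univ).orderEmbOfFin hcard) :=
    Finset.orderEmbOfFin_unique hcard
      (fun i => h ▸ Finset.mem_image_of_mem _ (Finset.mem_univ i)) h₂
  rw [e₁, e₂]

lemma bij_into {r : ℕ} {s : Finset ℕ} (hcard : s.card = r) (f : Fin r → ℕ)
    (hinj : Function.Injective f) (hmem : ∀ k, f k ∈ s) :
    Function.Bijective (fun k => (⟨f k, hmem k⟩ : s)) := by
  rw [Fintype.bijective_iff_injective_and_card]
  refine ⟨fun a b hab => hinj (congrArg Subtype.val hab), ?_⟩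
  rw [Fintype.card_coe, hcard, Fintype.card_fin]

lemma sum_piFinset_inj_eq {r N : ℕ} (g : (Fin r → ℕ) → A)
    (hg : ∀ p : Fin r → ℕ, ¬ Function.Injective p → g p = 0) :
    ∑ p ∈ (Fintype.piFinset fun _ : Fin r => Finset.range N), g p
      = ∑ J ∈ (Fintype.piFinset fun _ : Fin r => Finset.range N).filter
          (fun J => ∀ k l : Fin r, k < l → J k < J l),
          ∑ σ : Equiv.Perm (Fin r), g (J ∘ σ) := by
  classical
  rw [← Finset.sum_filter_of_ne (p := fun p => Function.Injective p)
    (fun p _ hp => by by_contra hni; exact hp (hg p hni))]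
  rw [← Finset.sum_product']
  refine (Finset.sum_bij (fun q (_ : q ∈ _) => q.1 ∘ q.2) ?_ ?_ ?_ ?_).symm
  · rintro ⟨J, σ⟩ hq
    simp only [Finset.mem_product, Finset.mem_filter, Fintype.mem_piFinset,
      Finset.mem_range] at hq ⊢
    obtain ⟨⟨hJr, hJm⟩, -⟩ := hq
    have hJmono : StrictMono J := fun a b hab => hJm a b hab
    exact ⟨fun k => hJr _, hJmono.injective.comp σ.injective⟩
  · rintro ⟨J₁, σ₁⟩ hq₁ ⟨J₂, σ₂⟩ hq₂ h
    simp only [Finset.mem_product, Finset.mem_filter, Fintype.mem_piFinset] at hq₁ hq₂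
    have hm₁ : StrictMono J₁ := fun a b hab => hq₁.1.2 a b hab
    have hm₂ : StrictMono J₂ := fun a b hab => hq₂.1.2 a b hab
    have h' : J₁ ∘ σ₁ = J₂ ∘ σ₂ := h
    have him : Finset.image J₁ Finset.univ = Finset.image J₂ Finset.univ := by
      have e1 : Finset.image (J₁ ∘ σ₁) Finset.univ = Finset.image J₁ Finset.univ := by
        rw [← Finset.image_image, Finset.image_univ_of_surjective σ₁.surjective]
      have e2 : Finset.image (J₂ ∘ σ₂) Finset.univ = Finset.image J₂ Finset.univ := by
        rw [← Finset.image_image, Finset.image_univ_of_surjective σ₂.surjective]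
      rw [← e1, ← e2, h']
    have hJ : J₁ = J₂ := strictMono_eq_of_image_eq hm₁ hm₂ him
    subst hJ
    have hσ : σ₁ = σ₂ :=
      Equiv.ext (fun k => hm₁.injective (congrFun h' k))
    rw [hσ]
  · intro p hp
    simp only [Finset.mem_filter, Fintype.mem_piFinset, Finset.mem_range] at hp
    obtain ⟨hpr, hpinj⟩ := hp
    set s : Finset ℕ := Finset.image p Finset.univ with hs
    have hcard : s.card = r := by
      rw [hs, Finset.card_image_of_injective _ hpinj, Finset.card_univ, Fintype.card_fin]
    set J : Fin r → ℕ := fun k => s.orderEmbOfFin hcard k with hJ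
    have hJmono : StrictMono J := (s.orderEmbOfFin hcard).strictMono
    have hmem_p : ∀ k, p k ∈ s := fun k => Finset.mem_image_of_mem _ (Finset.mem_univ k)
    have hmem_J : ∀ k, J k ∈ s := fun k => Finset.orderEmbOfFin_mem s hcard k
    have hsN : ∀ a ∈ s, a < N := by
      intro a ha
      rw [hs, Finset.mem_image] at ha
      obtain ⟨k, -, rfl⟩ := ha
      exact hpr k
    let e_p : Fin r ≃ s := Equiv.ofBijective _ (bij_into hcard p hpinj hmem_p)
    let e_J : Fin r ≃ s := Equiv.ofBijective _ (bij_into hcard J hJmono.injective hmem_J)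
    refine ⟨(J, e_p.trans (e_J.symm)), ?_, ?_⟩
    · simp only [Finset.mem_product, Finset.mem_filter, Fintype.mem_piFinset, Finset.mem_range]
      exact ⟨⟨fun k => hsN _ (hmem_J k), fun a b hab => hJmono hab⟩, Finset.mem_univ _⟩
    · funext k
      exact congrArg Subtype.val (e_J.apply_symm_apply (e_p k))
  · intro q hq
    rfl

def Cmat (r : ℕ) (I J : Fin r → ℕ) : Matrix (Fin r) (Fin r) A :=
  Matrix.of fun k l => ((I k).choose (J l) : A)

lemma detC_eq_zero {r : ℕ} {I J : Fin r → ℕ} (hI : Monotone I)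
    (hJ : Monotone J) {m : Fin r} (hm : I m < J m) :
    (Cmat (A := A) r I J).det = 0 := by
  rw [Matrix.det_apply']
  refine Finset.sum_eq_zero (fun σ _ => ?_)
  have hex : ∃ i : Fin r, σ i ≤ m ∧ m ≤ i := by
    by_contra hcon
    push_neg at hcon
    have hmaps : ∀ i ∈ Finset.Ici m, σ i ∈ Finset.Ioi m := by
      intro i hi
      rw [Finset.mem_Ici] at hi
      rw [Finset.mem_Ioi]
      by_contra hh
      push_neg at hh
      exact absurd hi (not_le.mpr (hcon i hh))
    have hcard := Finset.card_le_card_of_injOn σ hmaps (σ.injective.injOn)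
    rw [Fin.card_Ici, Fin.card_Ioi] at hcard
    have : (m : ℕ) < r := m.isLt
    omega
  obtain ⟨i, hσi, hmi⟩ := hex
  have hz : (Cmat (A := A) r I J) (σ i) i = 0 := by
    show (((I (σ i)).choose (J i) : ℕ) : A) = 0
    rw [Nat.choose_eq_zero_of_lt (lt_of_le_of_lt (hI hσi) (lt_of_lt_of_le hm (hJ hmi)))]
    exact Nat.cast_zero
  exact mul_eq_zero_of_right _ (Finset.prod_eq_zero (Finset.mem_univ i) hz)

lemma det_binom_expand {r N : ℕ} (I : Fin r → ℕ) (hN : ∀ k, I k < N) (x : Fin r → A) :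
    (Vmat r I (fun i => x i + 1)).det
      = ∑ p ∈ Fintype.piFinset (fun _ : Fin r => Finset.range N),
          (∏ k, ((I k).choose (p k) : A)) * (Vmat r p x).det := by
  have hrow : Vmat r I (fun i => x i + 1)
      = fun k => ∑ m ∈ Finset.range N, (((I k).choose m : A)) • (fun j => x j ^ m) := by
    funext k j
    show (x j + 1) ^ I k = _
    rw [add_pow]
    simp only [one_pow, mul_one, Finset.sum_apply, Pi.smul_apply, smul_eq_mul]
    rw [Finset.sum_subset (Finset.range_subset_range.mpr (hN k))]
    · exact Finset.sum_congr rfl (fun m _ => mul_comm _ _)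
    · intro m _ hm
      rw [Finset.mem_range, not_lt] at hm
      rw [Nat.choose_eq_zero_of_lt (by omega), Nat.cast_zero, mul_zero]
  rw [show (Vmat r I fun i => x i + 1).det
      = (Matrix.detRowAlternating (R := A) (n := Fin r)).toMultilinearMap
          (fun k => ∑ m ∈ Finset.range N, (((I k).choose m : A)) • (fun j => x j ^ m)) from by
    rw [← hrow]; rfl]
  rw [(Matrix.detRowAlternating (R := A) (n := Fin r)).toMultilinearMap.map_sum_finset
    (g := fun k m => (((I k).choose m : A)) • (fun j => x j ^ m))
    (A := fun _ => Finset.range N)]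
  refine Finset.sum_congr rfl (fun p _ => ?_)
  rw [MultilinearMap.map_smul_univ]
  rfl

lemma cauchy_binet {r N : ℕ} (I : Fin r → ℕ) (hN : ∀ k, I k < N) (x : Fin r → A) :
    (Vmat r I (fun i => x i + 1)).det
      = ∑ J ∈ (Fintype.piFinset fun _ : Fin r => Finset.range N).filter
            (fun J => ∀ k l : Fin r, k < l → J k < J l),
          (Cmat (A := A) r I J).det * (Vmat r J x).det := by
  rw [det_binom_expand I hN x]
  rw [sum_piFinset_inj_eq (fun p => (∏ k, ((I k).choose (p k) : A)) * (Vmat r p x).det)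
    (fun p hp => by
      rw [Function.not_injective_iff] at hp
      obtain ⟨a, b, hab, hne⟩ := hp
      exact mul_eq_zero_of_right _ (Matrix.det_zero_of_row_eq hne
        (show Vmat r p x a = Vmat r p x b from
          funext fun j => show x j ^ p a = x j ^ p b by rw [hab])))]
  refine Finset.sum_congr rfl (fun J hJ => ?_)
  -- ∑ σ, (∏ k, C(I k, J (σ k))) * det (Vmat (J∘σ) x) = det C * det V J
  have hperm : ∀ σ : Equiv.Perm (Fin r),
      (Vmat r (J ∘ σ) x).det = (Equiv.Perm.sign σ : ℤ) * (Vmat r J x).det := by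
    intro σ
    have : Vmat r (J ∘ σ) x = (Vmat r J x).submatrix σ id := rfl
    rw [this, Matrix.det_permute]
  have hdetC : (Cmat (A := A) r I J).det
      = ∑ σ : Equiv.Perm (Fin r), (Equiv.Perm.sign σ : ℤ) * ∏ k, ((I k).choose (J (σ k)) : A) := by
    rw [← Matrix.det_transpose, Matrix.det_apply']
    refine Finset.sum_congr rfl (fun σ _ => ?_)
    congr 1
  rw [hdetC, Finset.sum_mul]
  refine Finset.sum_congr rfl (fun σ _ => ?_)
  rw [hperm σ]
  show (∏ k, ((I k).choose (J (σ k)) : A)) * _ = _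
  ring

lemma vdm_shift {r : ℕ} (x : Fin r → A) :
    (Vmat r (fun k => (k : ℕ)) (fun i => x i + 1)).det
      = (Vmat r (fun k => (k : ℕ)) x).det := by
  have h : ∀ y : Fin r → A, (Vmat r (fun k => (k : ℕ)) y).det
      = ∏ i : Fin r, ∏ j ∈ Finset.Ioi i, (y j - y i) := by
    intro y
    have : Vmat r (fun k => (k : ℕ)) y = (Matrix.vandermonde y).transpose := rfl
    rw [this, Matrix.det_transpose, Matrix.det_vandermonde]
  rw [h, h]
  refine Finset.prod_congr rfl (fun i _ => Finset.prod_congr rfl (fun j _ => by ring))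

lemma main_ring {r : ℕ} (I : Fin r → ℕ) (hI : ∀ k l : Fin r, k < l → I k < I l)
    (x : Fin r → A) :
    (Mmat r I (fun i => x i + 1)).det * (Vmat r (fun k => (k : ℕ)) x).det
      = (∑ J ∈ (Fintype.piFinset fun _ : Fin r => Finset.range ((∑ k, I k) + 1)).filter
            (fun J => (∀ k l : Fin r, k < l → J k < J l) ∧ ∀ k, J k ≤ I k),
          (Cmat (A := A) r I J).det * (Mmat r J x).det)
        * (Vmat r (fun k => (k : ℕ)) x).det := by
  set N := (∑ k, I k) + 1 with hN
  have hNk : ∀ k, I k < N := fun k => by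
    have : I k ≤ ∑ k, I k := Finset.single_le_sum (fun j _ => Nat.zero_le _) (Finset.mem_univ k)
    omega
  have hImono : Monotone I := by
    intro a b hab
    rcases eq_or_lt_of_le hab with h | h
    · rw [h]
    · exact le_of_lt (hI a b h)
  calc (Mmat r I (fun i => x i + 1)).det * (Vmat r (fun k => (k : ℕ)) x).det
      = (Mmat r I (fun i => x i + 1)).det
          * (Vmat r (fun k => (k : ℕ)) (fun i => x i + 1)).det := by rw [vdm_shift]
    _ = (Vmat r I (fun i => x i + 1)).det := detM_mul_vdm r I _
    _ = ∑ J ∈ (Fintype.piFinset fun _ : Fin r => Finset.range N).filter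
            (fun J => ∀ k l : Fin r, k < l → J k < J l),
          (Cmat (A := A) r I J).det * (Vmat r J x).det := cauchy_binet I hNk x
    _ = ∑ J ∈ (Fintype.piFinset fun _ : Fin r => Finset.range N).filter
            (fun J => (∀ k l : Fin r, k < l → J k < J l) ∧ ∀ k, J k ≤ I k),
          (Cmat (A := A) r I J).det * (Vmat r J x).det := by
        refine (Finset.sum_subset ?_ ?_).symm
        · intro J hJ
          simp only [Finset.mem_filter] at hJ ⊢
          exact ⟨hJ.1, hJ.2.1⟩
        · intro J hJ hJn
          simp only [Finset.mem_filter] at hJ hJn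
          have hle : ¬ ∀ k, J k ≤ I k := fun hc => hJn ⟨hJ.1, hJ.2, hc⟩
          push_neg at hle
          obtain ⟨m, hm⟩ := hle
          have hJmono : Monotone J := by
            intro a b hab
            rcases eq_or_lt_of_le hab with h | h
            · rw [h]
            · exact le_of_lt (hJ.2 a b h)
          rw [detC_eq_zero hImono hJmono hm, zero_mul]
    _ = _ := by
        rw [Finset.sum_mul]
        refine Finset.sum_congr rfl (fun J hJ => ?_)
        rw [mul_assoc, detM_mul_vdm]

lemma map_hsymA {B : Type*} [CommRing B] (φ : A →+* B) (r d : ℕ) (x : Fin r → A) :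
    φ (hsymA r d x) = hsymA r d (fun i => φ (x i)) := by
  unfold hsymA
  rw [map_sum]
  refine Finset.sum_congr rfl (fun c _ => ?_)
  rw [map_prod]
  exact Finset.prod_congr rfl (fun i _ => map_pow φ _ _)

lemma map_hsymZA {B : Type*} [CommRing B] (φ : A →+* B) (r : ℕ) (m : ℤ) (x : Fin r → A) :
    φ (hsymZA r m x) = hsymZA r m (fun i => φ (x i)) := by
  unfold hsymZA
  split
  · exact map_hsymA φ r _ x
  · exact map_zero φ

lemma map_Mmat_det {B : Type*} [CommRing B] (φ : A →+* B) (r : ℕ) (K : Fin r → ℕ)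
    (x : Fin r → A) : φ (Mmat r K x).det = (Mmat r K (fun i => φ (x i))).det := by
  rw [RingHom.map_det]
  congr 1
  ext k m
  exact map_hsymZA φ r _ x

lemma map_Cmat_det {B : Type*} [CommRing B] (φ : A →+* B) (r : ℕ) (I J : Fin r → ℕ) :
    φ (Cmat (A := A) r I J).det = (Cmat (A := B) r I J).det := by
  rw [RingHom.map_det]
  congr 1
  ext k l
  exact map_natCast φ _

lemma vdm_ne_zero (r : ℕ) :
    (Vmat r (fun k => (k : ℕ)) (fun i => (MvPolynomial.X i : MvPolynomial (Fin r) ℚ))).det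
      ≠ 0 := by
  have : Vmat r (fun k => (k : ℕ)) (fun i => (MvPolynomial.X i : MvPolynomial (Fin r) ℚ))
      = (Matrix.vandermonde fun i => (MvPolynomial.X i : MvPolynomial (Fin r) ℚ)).transpose :=
    rfl
  rw [this, Matrix.det_transpose, Matrix.det_vandermonde]
  rw [Finset.prod_ne_zero_iff]
  intro i _
  rw [Finset.prod_ne_zero_iff]
  intro j hj
  rw [Finset.mem_Ioi] at hj
  rw [sub_ne_zero]
  intro h
  exact absurd (MvPolynomial.X_injective h) (Fin.ne_of_gt hj)

lemma main_poly {r : ℕ} (I : Fin r → ℕ) (hI : ∀ k l : Fin r, k < l → I k < I l) :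
    (Mmat r I (fun i => (MvPolynomial.X i : MvPolynomial (Fin r) ℚ) + 1)).det
      = ∑ J ∈ (Fintype.piFinset fun _ : Fin r => Finset.range ((∑ k, I k) + 1)).filter
            (fun J => (∀ k l : Fin r, k < l → J k < J l) ∧ ∀ k, J k ≤ I k),
          (Cmat (A := MvPolynomial (Fin r) ℚ) r I J).det
            * (Mmat r J (fun i => MvPolynomial.X i)).det := by
  exact mul_right_cancel₀ (vdm_ne_zero r) (main_ring I hI (fun i => MvPolynomial.X i))

lemma main_rat {r : ℕ} (I : Fin r → ℕ) (hI : ∀ k l : Fin r, k < l → I k < I l)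
    (x : Fin r → ℚ) :
    (Mmat r I (fun i => x i + 1)).det
      = ∑ J ∈ (Fintype.piFinset fun _ : Fin r => Finset.range ((∑ k, I k) + 1)).filter
            (fun J => (∀ k l : Fin r, k < l → J k < J l) ∧ ∀ k, J k ≤ I k),
          (Cmat (A := ℚ) r I J).det * (Mmat r J x).det := by
  have h := congrArg (MvPolynomial.eval x) (main_poly I hI)
  set φ := MvPolynomial.eval x with hφ
  rw [map_sum] at h
  rw [map_Mmat_det φ] at h
  have hx1 : (fun i => φ ((MvPolynomial.X i : MvPolynomial (Fin r) ℚ) + 1)) = fun i => x i + 1 := by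
    funext i; simp [hφ]
  rw [hx1] at h
  rw [h]
  refine Finset.sum_congr rfl (fun J _ => ?_)
  rw [map_mul, map_Cmat_det φ, map_Mmat_det φ]
  congr 1
  congr 1
  funext i
  simp [hφ]

lemma le_of_pairwise_lt {r : ℕ} {K : Fin r → ℕ} (h : ∀ k l : Fin r, k < l → K k < K l)
    (k : Fin r) : (k : ℕ) ≤ K k := by
  have H : ∀ v (hv : v < r), v ≤ K ⟨v, hv⟩ := by
    intro v
    induction v with
    | zero => intro hv; exact Nat.zero_le _
    | succ n ih =>
      intro hv
      have hn : n < r := by omega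
      have h1 := h ⟨n, hn⟩ ⟨n + 1, hv⟩ (by simp [Fin.lt_def])
      have h2 := ih hn
      omega
  have := H k.1 k.2
  simpa using this

lemma schur_eq_detM (r : ℕ) (K : Fin r → ℕ) (h : ∀ k l : Fin r, k < l → K k < K l)
    (x : Fin r → ℚ) : schur r (lambdaOf r K) x = (Mmat r K x).det := by
  have harg : ∀ k l : Fin r, ((lambdaOf r K k : ℕ) : ℤ) + (l : ℕ) - (k : ℕ)
      = ((K k.rev : ℕ) : ℤ) - ((l.rev : ℕ) : ℕ) := by
    intro k l
    unfold lambdaOf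
    have h1 : (k.rev : ℕ) ≤ K k.rev := le_of_pairwise_lt h k.rev
    rw [Nat.cast_sub h1]
    have hk : (k.rev : ℕ) = r - 1 - (k : ℕ) := by rw [Fin.val_rev]; omega
    have hl : (l.rev : ℕ) = r - 1 - (l : ℕ) := by rw [Fin.val_rev]; omega
    have hk2 : (k : ℕ) < r := k.isLt
    have hl2 : (l : ℕ) < r := l.isLt
    omega
  have hmat : (Matrix.of fun k l : Fin r => hsymZ r ((lambdaOf r K k : ℤ) + (l : ℕ) - (k : ℕ)) x)
      = (Mmat r K x).submatrix Fin.revPerm Fin.revPerm := by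
    ext k l
    show hsymZ r ((lambdaOf r K k : ℤ) + (l : ℕ) - (k : ℕ)) x
      = hsymZA r ((K k.rev : ℤ) - ((l.rev : ℕ) : ℕ)) x
    rw [show hsymZ = hsymZA (A := ℚ) from rfl]
    exact congrArg (fun t => hsymZA r t x) (harg k l)
  unfold schur
  rw [hmat, Matrix.det_submatrix_equiv_self]


end

/-- `s_{λ(I)}(x_1+1,…,x_r+1) = ∑_{J ≤ I} s_{I,J} · s_{λ(J)}(x_1,…,x_r)`, where
`s_{I,J} = det(C(i_k, j_l))` and the sum runs over strictly increasing `J` with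
`J ≤ I` componentwise. -/
theorem stmt12 (r : ℕ) (I : Fin r → ℕ) (hI : StrictMono I) (x : Fin r → ℚ) :
    schur r (lambdaOf r I) (fun i => x i + 1)
      = ∑ J ∈ (Fintype.piFinset fun _ : Fin r => Finset.range ((∑ k, I k) + 1)).filter
            (fun J => (∀ k l : Fin r, k < l → J k < J l) ∧ ∀ k, J k ≤ I k),
          Matrix.det (Matrix.of fun k l : Fin r => ((I k).choose (J l) : ℚ)) *
            schur r (lambdaOf r J) x := by
  have hpair : ∀ k l : Fin r, k < l → I k < I l := fun k l h => hI h
  rw [schur_eq_detM r I hpair (fun i => x i + 1), main_rat I hpair x]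
  refine Finset.sum_congr rfl (fun J hJ => ?_)
  simp only [Finset.mem_filter] at hJ
  rw [schur_eq_detM r J hJ.2.1 x]
  rfl
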